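/- Let n, r, k be positive integers with k ≤ r, let a ∈ ℝ with a ≥ 0, and let A₁,...,A_k ⊆ {1,...,n} be sum-free sets each satisfying |A_i| ≤ min(A_i), and suppose Σ_{i=1}^k (⌈n/2⌉ − |A_i|) ≤ an. Then |A₁ ∩ ⋯ ∩ A_k| ≥ ⌈n/2⌉ − (k−1) − kan. -/
import Mathlib


/-- If `A₁,...,A_k ⊆ {1,...,n}` are sum-free sets of type (c) (each satisfies
`|A_i| ≤ min(A_i)`) whose total deficiency from `⌈n/2⌉` is at most `an`, then
`|A₁ ∩ ⋯ ∩ A_k| ≥ ⌈n/2⌉ − (k−1) − kan`. -/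
theorem intersection_of_type_c (n r k : ℕ) (hn : 1 ≤ n) (hk : 1 ≤ k) (hkr : k ≤ r)
    (a : ℝ) (ha : 0 ≤ a) (A : Fin k → Finset ℕ)
    (hsub : ∀ i, A i ⊆ Finset.Icc 1 n)
    (hne : ∀ i, (A i).Nonempty)
    (hsf : ∀ i, ∀ x ∈ A i, ∀ y ∈ A i, x + y ∉ A i)
    (hmin : ∀ i, ∀ x ∈ A i, (A i).card ≤ x)
    (hdef : ∑ i : Fin k, ((((n + 1) / 2 : ℕ) : ℝ) - ((A i).card : ℝ)) ≤ a * n) :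
    (((n + 1) / 2 : ℕ) : ℝ) - (k - 1 : ℝ) - k * a * n ≤
      ((((Finset.Icc 1 n).filter (fun z => ∀ i, z ∈ A i)).card : ℕ) : ℝ) := by
  classical
  set c : ℕ := (n + 1) / 2 with hc
  set f : Fin k → ℕ := fun i => (A i).min' (hne i) with hfdef
  have hmemf : ∀ i, f i ∈ A i := fun i => Finset.min'_mem _ _
  have hfle : ∀ i, ∀ x ∈ A i, f i ≤ x := fun i x hx => Finset.min'_le _ _ hx
  have hcardf : ∀ i, (A i).card ≤ f i := fun i => hmin i _ (hmemf i)
  have hf1 : ∀ i, 1 ≤ f i := fun i => (Finset.mem_Icc.mp (hsub i (hmemf i))).1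
  have hfn : ∀ i, f i ≤ n := fun i => (Finset.mem_Icc.mp (hsub i (hmemf i))).2
  obtain ⟨i₀, -, hi₀⟩ := Finset.exists_max_image (Finset.univ : Finset (Fin k)) f
    ⟨⟨0, hk⟩, Finset.mem_univ _⟩
  have hi₀' : ∀ i, f i ≤ f i₀ := fun i => hi₀ i (Finset.mem_univ i)
  set m := f i₀ with hm
  set I : Finset ℕ := Finset.Icc m n with hI
  have hmn : m ≤ n := hfn i₀
  have hm1 : 1 ≤ m := hf1 i₀
  have hIcard : I.card = n + 1 - m := by simp [hI, Nat.card_Icc]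
  have hsubI : ∀ i, A i ⊆ Finset.Icc (f i) n := by
    intro i x hx
    exact Finset.mem_Icc.mpr ⟨hfle i x hx, (Finset.mem_Icc.mp (hsub i hx)).2⟩
  have h2card : ∀ i, 2 * (A i).card ≤ n + 1 := by
    intro i
    have h1 : (A i).card ≤ n + 1 - f i := by
      calc (A i).card ≤ (Finset.Icc (f i) n).card := Finset.card_le_card (hsubI i)
        _ = n + 1 - f i := by simp [Nat.card_Icc]
    have h2 := hcardf i
    have h3 := hfn i
    omega
  have hcardc : ∀ i, (A i).card ≤ c := by
    intro i; have := h2card i; omega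
  have hnc : n ≤ 2 * c := by omega
  set P : ℕ → Prop := fun z => ∀ i, z ∈ A i with hP
  have hcover : I.filter (fun z => ¬ P z) ⊆ Finset.univ.biUnion (fun i => I \ A i) := by
    intro z hz
    rw [Finset.mem_filter] at hz
    have h2 : ¬ ∀ i, z ∈ A i := hz.2
    obtain ⟨i, hi⟩ := not_forall.mp h2
    exact Finset.mem_biUnion.mpr ⟨i, Finset.mem_univ _, Finset.mem_sdiff.mpr ⟨hz.1, hi⟩⟩
  have hcount : I.card ≤ (I.filter P).card + ∑ i, (I \ A i).card := by
    have h1 := Finset.card_filter_add_card_filter_not (s := I) (p := P)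
    have h2 : (I.filter (fun z => ¬ P z)).card ≤ ∑ i, (I \ A i).card :=
      le_trans (Finset.card_le_card hcover) Finset.card_biUnion_le
    omega
  have hper : ∀ i, (I \ A i).card + 2 * (A i).card ≤ n + 1 := by
    intro i
    have hsd : (I \ A i).card + (I ∩ A i).card = I.card :=
      Finset.card_sdiff_add_card_inter I (A i)
    have hsd2 : (A i ∩ I).card + (A i \ I).card = (A i).card :=
      Finset.card_inter_add_card_sdiff (A i) I
    have hout : A i \ I ⊆ Finset.Icc (f i) (m - 1) := by
      intro x hx
      rw [Finset.mem_sdiff] at hx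
      have h1 := Finset.mem_Icc.mp (hsubI i hx.1)
      have h2 : ¬ (m ≤ x ∧ x ≤ n) := by simpa [hI, Finset.mem_Icc] using hx.2
      exact Finset.mem_Icc.mpr ⟨h1.1, by omega⟩
    have houtcard : (A i \ I).card ≤ m - 1 + 1 - f i := by
      calc (A i \ I).card ≤ (Finset.Icc (f i) (m - 1)).card := Finset.card_le_card hout
        _ = m - 1 + 1 - f i := by simp [Nat.card_Icc]
    have hic : (I ∩ A i).card = (A i ∩ I).card := by rw [Finset.inter_comm]
    have hfi : f i ≤ m := hi₀' i
    have hci := hcardf i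
    have hfi1 := hf1 i
    omega
  have hper0 : (I \ A i₀).card + (A i₀).card = I.card :=
    Finset.card_sdiff_add_card_eq_card (hsubI i₀)
  have hTcard : (I.filter P).card ≤ ((Finset.Icc 1 n).filter (fun z => ∀ i, z ∈ A i)).card :=
    Finset.card_le_card (Finset.filter_subset_filter _ (Finset.Icc_subset_Icc hm1 le_rfl))
  -- pass to the reals
  have hd0 : ∀ i, (0:ℝ) ≤ (c:ℝ) - ((A i).card : ℝ) := by
    intro i
    have := hcardc i
    have : ((A i).card : ℝ) ≤ (c:ℝ) := Nat.cast_le.mpr this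
    linarith
  have hdan : ∀ i, (c:ℝ) - ((A i).card : ℝ) ≤ a * n := by
    intro i
    have h1 : (c:ℝ) - ((A i).card : ℝ) ≤ ∑ j : Fin k, ((c:ℝ) - ((A j).card : ℝ)) :=
      Finset.single_le_sum (fun j _ => hd0 j) (Finset.mem_univ i)
    linarith
  have hsplit : ∑ i : Fin k, ((c:ℝ) - ((A i).card : ℝ)) =
      ((c:ℝ) - ((A i₀).card : ℝ)) +
        ∑ i ∈ Finset.univ.erase i₀, ((c:ℝ) - ((A i).card : ℝ)) :=
    (Finset.add_sum_erase _ _ (Finset.mem_univ i₀)).symm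
  have hcard_erase : ((Finset.univ.erase i₀ : Finset (Fin k)).card : ℝ) = (k:ℝ) - 1 := by
    have : (Finset.univ.erase i₀ : Finset (Fin k)).card = k - 1 := by
      rw [Finset.card_erase_of_mem (Finset.mem_univ _), Finset.card_univ, Fintype.card_fin]
    rw [this, Nat.cast_sub hk, Nat.cast_one]
  have hsum_erase_d : ∑ i ∈ Finset.univ.erase i₀, ((c:ℝ) - ((A i).card : ℝ)) ≤
      ((k:ℝ) - 1) * (a * n) := by
    calc ∑ i ∈ Finset.univ.erase i₀, ((c:ℝ) - ((A i).card : ℝ))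
        ≤ ∑ i ∈ Finset.univ.erase i₀, a * n := Finset.sum_le_sum (fun i _ => hdan i)
      _ = ((Finset.univ.erase i₀ : Finset (Fin k)).card : ℝ) * (a * n) := by
          rw [Finset.sum_const, nsmul_eq_mul]
      _ = ((k:ℝ) - 1) * (a * n) := by rw [hcard_erase]
  -- main counting inequality in ℝ
  have hcount' : (I.card : ℝ) ≤ ((I.filter P).card : ℝ) + ∑ i, (((I \ A i).card : ℕ) : ℝ) := by
    exact_mod_cast hcount
  have hsplitI : ∑ i : Fin k, (((I \ A i).card : ℕ) : ℝ) =
      (((I \ A i₀).card : ℕ) : ℝ) + ∑ i ∈ Finset.univ.erase i₀, (((I \ A i).card : ℕ) : ℝ) :=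
    (Finset.add_sum_erase _ _ (Finset.mem_univ i₀)).symm
  have hper0' : (((I \ A i₀).card : ℕ) : ℝ) + ((A i₀).card : ℝ) = (I.card : ℝ) := by
    exact_mod_cast hper0
  have herase_bound : ∑ i ∈ Finset.univ.erase i₀, (((I \ A i).card : ℕ) : ℝ) ≤
      ((k:ℝ) - 1) + 2 * ∑ i ∈ Finset.univ.erase i₀, ((c:ℝ) - ((A i).card : ℝ)) := by
    calc ∑ i ∈ Finset.univ.erase i₀, (((I \ A i).card : ℕ) : ℝ)
        ≤ ∑ i ∈ Finset.univ.erase i₀, (1 + 2 * ((c:ℝ) - ((A i).card : ℝ))) := by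
          refine Finset.sum_le_sum (fun i _ => ?_)
          have h1 := hper i
          have h1' : (((I \ A i).card : ℕ) : ℝ) + 2 * ((A i).card : ℝ) ≤ (n:ℝ) + 1 := by
            exact_mod_cast h1
          have h2 : (n:ℝ) ≤ 2 * (c:ℝ) := by exact_mod_cast hnc
          linarith
      _ = ((Finset.univ.erase i₀ : Finset (Fin k)).card : ℝ) * 1 +
            2 * ∑ i ∈ Finset.univ.erase i₀, ((c:ℝ) - ((A i).card : ℝ)) := by
          rw [Finset.sum_add_distrib, Finset.sum_const, nsmul_eq_mul, Finset.mul_sum]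
      _ = ((k:ℝ) - 1) + 2 * ∑ i ∈ Finset.univ.erase i₀, ((c:ℝ) - ((A i).card : ℝ)) := by
          rw [hcard_erase]; ring
  have hT' : ((I.filter P).card : ℝ) ≤
      ((((Finset.Icc 1 n).filter (fun z => ∀ i, z ∈ A i)).card : ℕ) : ℝ) := by
    exact_mod_cast hTcard
  have hring : a * n + ((k:ℝ) - 1) * (a * n) = (k:ℝ) * a * n := by ring
  have hdi₀ := hdan i₀
  linarith [hdef, hsplit, hsum_erase_d]
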